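/- arXiv:2602.19557 — 2 statements merged into one kernel-verified Lean document; each statement's English description precedes it below -/
import Mathlib

section
/- Let 0 < p ≤ 1, let ω be a weight on ℤ^d, and let A be a Banach algebra. For f, g ∈ ℓ^p_ω(ℤ^d, A), the convolution (f ⋆ g)(n) = Σ_{m∈ℤ^d} f(n−m) g(m) is well defined (the series converges absolutely) and ‖f ⋆ g‖_{ℓ^p_ω} ≤ ‖f‖_{ℓ^p_ω} ‖g‖_{ℓ^p_ω}, where ‖f‖_{ℓ^p_ω} = Σ_n ‖f(n)‖^p ω(n)^p. -/
private lemma aux_rpow_add_le {p : ℝ} (hp0 : 0 < p) (hp1 : p ≤ 1) {x y : ℝ}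
    (hx : 0 ≤ x) (hy : 0 ≤ y) : (x + y) ^ p ≤ x ^ p + y ^ p := by
  have h := NNReal.rpow_add_le_add_rpow x.toNNReal y.toNNReal hp0.le hp1
  have h' := NNReal.coe_le_coe.2 h
  push_cast at h'
  rwa [Real.coe_toNNReal x hx, Real.coe_toNNReal y hy] at h'

private lemma aux_finset_rpow {ι : Type*} {p : ℝ} (hp0 : 0 < p) (hp1 : p ≤ 1)
    (a : ι → ℝ) (ha : ∀ i, 0 ≤ a i) (s : Finset ι) :
    (∑ i ∈ s, a i) ^ p ≤ ∑ i ∈ s, a i ^ p := by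
  classical
  induction s using Finset.induction with
  | empty => simp [Real.zero_rpow hp0.ne']
  | insert j t hi ih =>
      rw [Finset.sum_insert hi, Finset.sum_insert hi]
      calc (a j + ∑ i ∈ t, a i) ^ p ≤ a j ^ p + (∑ i ∈ t, a i) ^ p :=
            aux_rpow_add_le hp0 hp1 (ha j) (Finset.sum_nonneg fun i _ => ha i)
        _ ≤ a j ^ p + ∑ i ∈ t, a i ^ p := by linarith

private lemma aux_tsum_rpow {ι : Type*} {p : ℝ} (hp0 : 0 < p) (hp1 : p ≤ 1)
    (a : ι → ℝ) (ha : ∀ i, 0 ≤ a i) (hs : Summable a)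
    (hsp : Summable fun i => a i ^ p) :
    (∑' i, a i) ^ p ≤ ∑' i, a i ^ p := by
  have key : ∀ s : Finset ι, (∑ i ∈ s, a i) ^ p ≤ ∑' i, a i ^ p := fun s =>
    (aux_finset_rpow hp0 hp1 a ha s).trans
      (Summable.sum_le_tsum s (fun i _ => Real.rpow_nonneg (ha i) p) hsp)
  have hcont : ContinuousAt (fun x : ℝ => x ^ p) (∑' i, a i) :=
    Real.continuousAt_rpow_const _ _ (Or.inr hp0.le)
  have htends : Filter.Tendsto (fun s : Finset ι => (∑ i ∈ s, a i) ^ p)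
      Filter.atTop (nhds ((∑' i, a i) ^ p)) :=
    hcont.tendsto.comp hs.hasSum
  exact le_of_tendsto htends (Filter.Eventually.of_forall key)

private def shearEquiv (d : ℕ) : ((Fin d → ℤ) × (Fin d → ℤ)) ≃ ((Fin d → ℤ) × (Fin d → ℤ)) :=
  ⟨fun q => (q.1 + q.2, q.2), fun q => (q.1 - q.2, q.2),
    fun q => by simp, fun q => by simp⟩

private lemma aux_summable_of_rpow {ι : Type*} {p : ℝ} (hp0 : 0 < p) (hp1 : p ≤ 1)
    (b : ι → ℝ) (hb : ∀ i, 0 ≤ b i) (hsp : Summable fun i => b i ^ p) :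
    Summable b := by
  set S := ∑' i, b i ^ p with hS
  have hS0 : 0 ≤ S := tsum_nonneg fun i => Real.rpow_nonneg (hb i) p
  have hle : ∀ i, b i ≤ b i ^ p * S ^ ((1 - p) / p) := by
    intro i
    have h1 : b i ^ p ≤ S := Summable.le_tsum hsp i (fun j _ => Real.rpow_nonneg (hb j) p)
    have h2 : b i ^ (1 - p) = (b i ^ p) ^ ((1 - p) / p) := by
      rw [← Real.rpow_mul (hb i)]
      congr 1
      field_simp
    have h3 : b i ^ (1 - p) ≤ S ^ ((1 - p) / p) := by
      rw [h2]
      exact Real.rpow_le_rpow (Real.rpow_nonneg (hb i) p) h1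
        (div_nonneg (by linarith) hp0.le)
    calc b i = b i ^ (p + (1 - p)) := by norm_num
      _ = b i ^ p * b i ^ (1 - p) := Real.rpow_add' (hb i) (by norm_num)
      _ ≤ b i ^ p * S ^ ((1 - p) / p) :=
          mul_le_mul_of_nonneg_left h3 (Real.rpow_nonneg (hb i) p)
  exact Summable.of_nonneg_of_le hb hle (hsp.mul_right _)

theorem weighted_lp_convolution_inequality (d : ℕ) (p : ℝ) (hp0 : 0 < p) (hp1 : p ≤ 1)
    (ω : (Fin d → ℤ) → ℝ)
    (hω1 : ∀ n, 1 ≤ ω n) (hωsub : ∀ m n, ω (m + n) ≤ ω m * ω n)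
    (A : Type*) [NormedRing A] [NormedAlgebra ℂ A] [CompleteSpace A]
    (f g : (Fin d → ℤ) → A)
    (hf : Summable (fun n => ‖f n‖ ^ p * ω n ^ p))
    (hg : Summable (fun n => ‖g n‖ ^ p * ω n ^ p)) :
    (∀ n, Summable (fun m => ‖f (n - m)‖ * ‖g m‖)) ∧
    Summable (fun n => ‖∑' m, f (n - m) * g m‖ ^ p * ω n ^ p) ∧
    (∑' n, ‖∑' m, f (n - m) * g m‖ ^ p * ω n ^ p) ≤
      (∑' n, ‖f n‖ ^ p * ω n ^ p) * (∑' n, ‖g n‖ ^ p * ω n ^ p) := by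
  set F : (Fin d → ℤ) → ℝ := fun n => ‖f n‖ ^ p * ω n ^ p with hFdef
  set G : (Fin d → ℤ) → ℝ := fun n => ‖g n‖ ^ p * ω n ^ p with hGdef
  have hω0 : ∀ n, (0:ℝ) ≤ ω n := fun n => le_trans zero_le_one (hω1 n)
  have hF0 : ∀ n, 0 ≤ F n := fun n =>
    mul_nonneg (Real.rpow_nonneg (norm_nonneg _) p) (Real.rpow_nonneg (hω0 n) p)
  have hG0 : ∀ n, 0 ≤ G n := fun n =>
    mul_nonneg (Real.rpow_nonneg (norm_nonneg _) p) (Real.rpow_nonneg (hω0 n) p)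
  -- pointwise bound : (‖f a‖ * ‖g m‖)^p ≤ F a * G m
  have hkey : ∀ a m, (‖f a‖ * ‖g m‖) ^ p ≤ F a * G m := by
    intro a m
    rw [Real.mul_rpow (norm_nonneg _) (norm_nonneg _)]
    have h1 : ‖f a‖ ^ p ≤ F a := by
      have : (1:ℝ) ≤ ω a ^ p := Real.one_le_rpow (hω1 a) hp0.le
      calc ‖f a‖ ^ p = ‖f a‖ ^ p * 1 := by ring
        _ ≤ ‖f a‖ ^ p * ω a ^ p :=
            mul_le_mul_of_nonneg_left this (Real.rpow_nonneg (norm_nonneg _) p)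
    have h2 : ‖g m‖ ^ p ≤ G m := by
      have : (1:ℝ) ≤ ω m ^ p := Real.one_le_rpow (hω1 m) hp0.le
      calc ‖g m‖ ^ p = ‖g m‖ ^ p * 1 := by ring
        _ ≤ ‖g m‖ ^ p * ω m ^ p :=
            mul_le_mul_of_nonneg_left this (Real.rpow_nonneg (norm_nonneg _) p)
    exact mul_le_mul h1 h2 (Real.rpow_nonneg (norm_nonneg _) p) (hF0 a)
  -- summability of the double family F(n-m) * G m over pairs
  have hpair : Summable (fun q : (Fin d → ℤ) × (Fin d → ℤ) => F (q.1 - q.2) * G q.2) := by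
    have h0 : Summable (fun q : (Fin d → ℤ) × (Fin d → ℤ) => F q.1 * G q.2) := hf.mul_of_nonneg hg hF0 hG0
    apply ((shearEquiv d).summable_iff
      (f := fun q : (Fin d → ℤ) × (Fin d → ℤ) => F (q.1 - q.2) * G q.2)).1
    have hco : ((fun q : (Fin d → ℤ) × (Fin d → ℤ) => F (q.1 - q.2) * G q.2) ∘ ⇑(shearEquiv d))
        = fun q => F q.1 * G q.2 := by
      funext q; simp [shearEquiv]
    rw [hco]; exact h0
  have hFG : ∀ n, Summable (fun m => F (n - m) * G m) := fun n => hpair.prod_factor n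
  -- part 1 : per-n summability
  have part1 : ∀ n, Summable (fun m => ‖f (n - m)‖ * ‖g m‖) := by
    intro n
    apply aux_summable_of_rpow hp0 hp1 _ (fun m => mul_nonneg (norm_nonneg _) (norm_nonneg _))
    exact Summable.of_nonneg_of_le
      (fun m => Real.rpow_nonneg (mul_nonneg (norm_nonneg _) (norm_nonneg _)) p)
      (fun m => hkey (n - m) m) (hFG n)
  -- per-n bound : T n ≤ K n
  have hT : ∀ n, ‖∑' m, f (n - m) * g m‖ ^ p * ω n ^ p ≤ ∑' m, F (n - m) * G m := by
    intro n
    have hs1 : Summable (fun m => ‖f (n - m) * g m‖) :=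
      Summable.of_nonneg_of_le (fun m => norm_nonneg _) (fun m => norm_mul_le _ _) (part1 n)
    have h1 : ‖∑' m, f (n - m) * g m‖ ≤ ∑' m, ‖f (n - m)‖ * ‖g m‖ :=
      (norm_tsum_le_tsum_norm hs1).trans
        (Summable.tsum_le_tsum (fun m => norm_mul_le _ _) hs1 (part1 n))
    have hnn : (0:ℝ) ≤ ∑' m, ‖f (n - m)‖ * ‖g m‖ :=
      tsum_nonneg fun m => mul_nonneg (norm_nonneg _) (norm_nonneg _)
    have h2 : ‖∑' m, f (n - m) * g m‖ ^ p ≤ (∑' m, ‖f (n - m)‖ * ‖g m‖) ^ p :=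
      Real.rpow_le_rpow (norm_nonneg _) h1 hp0.le
    have hsp : Summable (fun m => (‖f (n - m)‖ * ‖g m‖) ^ p) :=
      Summable.of_nonneg_of_le
        (fun m => Real.rpow_nonneg (mul_nonneg (norm_nonneg _) (norm_nonneg _)) p)
        (fun m => hkey (n - m) m) (hFG n)
    have h3 : (∑' m, ‖f (n - m)‖ * ‖g m‖) ^ p ≤ ∑' m, (‖f (n - m)‖ * ‖g m‖) ^ p :=
      aux_tsum_rpow hp0 hp1 _ (fun m => mul_nonneg (norm_nonneg _) (norm_nonneg _))
        (part1 n) hsp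
    -- multiply by ω n ^ p and absorb the weight
    have hωnp : (0:ℝ) ≤ ω n ^ p := Real.rpow_nonneg (hω0 n) p
    have h4 : (∑' m, (‖f (n - m)‖ * ‖g m‖) ^ p) * ω n ^ p ≤ ∑' m, F (n - m) * G m := by
      rw [← tsum_mul_right]
      refine Summable.tsum_le_tsum (fun m => ?_) (hsp.mul_right _) (hFG n)
      have hωn : ω n ≤ ω (n - m) * ω m := by
        have := hωsub (n - m) m
        simpa using this
      have hωp : ω n ^ p ≤ (ω (n - m) * ω m) ^ p :=
        Real.rpow_le_rpow (hω0 n) hωn hp0.le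
      have : (‖f (n - m)‖ * ‖g m‖) ^ p * ω n ^ p ≤
          (‖f (n - m)‖ * ‖g m‖) ^ p * (ω (n - m) * ω m) ^ p :=
        mul_le_mul_of_nonneg_left hωp
          (Real.rpow_nonneg (mul_nonneg (norm_nonneg _) (norm_nonneg _)) p)
      refine this.trans (le_of_eq ?_)
      rw [Real.mul_rpow (norm_nonneg _) (norm_nonneg _),
        Real.mul_rpow (hω0 _) (hω0 _)]
      simp only [hFdef, hGdef]
      ring
    calc ‖∑' m, f (n - m) * g m‖ ^ p * ω n ^ p
        ≤ (∑' m, ‖f (n - m)‖ * ‖g m‖) ^ p * ω n ^ p :=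
          mul_le_mul_of_nonneg_right h2 hωnp
      _ ≤ (∑' m, (‖f (n - m)‖ * ‖g m‖) ^ p) * ω n ^ p :=
          mul_le_mul_of_nonneg_right h3 hωnp
      _ ≤ ∑' m, F (n - m) * G m := h4
  -- K summable with sum (∑F)(∑G)
  have hK : Summable (fun n => ∑' m, F (n - m) * G m) := hpair.prod
  have hKsum : (∑' n, ∑' m, F (n - m) * G m) = (∑' n, F n) * (∑' n, G n) := by
    rw [← Summable.tsum_prod hpair]
    have he : (∑' q : (Fin d → ℤ) × (Fin d → ℤ), F (q.1 - q.2) * G q.2)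
        = ∑' q : (Fin d → ℤ) × (Fin d → ℤ), F q.1 * G q.2 := by
      rw [← (shearEquiv d).tsum_eq
        (fun q : (Fin d → ℤ) × (Fin d → ℤ) => F (q.1 - q.2) * G q.2)]
      simp [shearEquiv]
    rw [he, Summable.tsum_prod (hf.mul_of_nonneg hg hF0 hG0)]
    simp_rw [tsum_mul_left, tsum_mul_right]
  have hT0 : ∀ n, 0 ≤ ‖∑' m, f (n - m) * g m‖ ^ p * ω n ^ p := fun n =>
    mul_nonneg (Real.rpow_nonneg (norm_nonneg _) p) (Real.rpow_nonneg (hω0 n) p)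
  have part2 : Summable (fun n => ‖∑' m, f (n - m) * g m‖ ^ p * ω n ^ p) :=
    Summable.of_nonneg_of_le hT0 hT hK
  refine ⟨part1, part2, ?_⟩
  calc (∑' n, ‖∑' m, f (n - m) * g m‖ ^ p * ω n ^ p)
      ≤ ∑' n, ∑' m, F (n - m) * G m := Summable.tsum_le_tsum hT part2 hK
    _ = (∑' n, F n) * (∑' n, G n) := hKsum
end

section
/- Let 0 < p ≤ 1, let ω be a weight on ℤ^d, and let A be a unital Banach algebra. For f ∈ ℓ¹(ℤ^d, ℂ), let F(n) = f(n)·1_A ∈ A. If F is invertible in the convolution algebra ℓ^p_ω(ℤ^d, A) with inverse g, then g takes values in ℂ·1_A; consequently f is invertible in ℓ^p_ω(ℤ^d, ℂ) if and only if F is invertible in ℓ^p_ω(ℤ^d, A). -/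
noncomputable def conv {d : ℕ} {A : Type*} [NormedRing A]
    (f g : (Fin d → ℤ) → A) : (Fin d → ℤ) → A :=
  fun n => ∑' m, f (n - m) * g m

noncomputable def delta {d : ℕ} (A : Type*) [NormedRing A] [One A] : (Fin d → ℤ) → A :=
  fun n => if n = 0 then 1 else 0

section Aux

variable {d : ℕ} {A : Type*} [NormedRing A]

lemma conv_delta (f : (Fin d → ℤ) → A) : conv f (delta A) = f := by
  funext n
  unfold conv delta
  rw [tsum_eq_single 0 (by intro m hm; simp [hm])]
  simp

lemma delta_conv (f : (Fin d → ℤ) → A) : conv (delta A) f = f := by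
  funext n
  unfold conv delta
  rw [tsum_eq_single n (by intro m hm; simp [sub_eq_zero, (Ne.symm hm)])]
  simp

/-- each value is bounded by the ℓ¹ norm -/
lemma le_tsum_norm {f : (Fin d → ℤ) → A} (hf : Summable fun n => ‖f n‖) (j : (Fin d → ℤ)) :
    ‖f j‖ ≤ ∑' n, ‖f n‖ :=
  Summable.le_tsum hf j (fun _ _ => norm_nonneg _)

lemma summable_shift_mul [CompleteSpace A] {f g : (Fin d → ℤ) → A}
    (hf : Summable fun n => ‖f n‖) (hg : Summable fun n => ‖g n‖) (n : Fin d → ℤ) :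
    Summable fun m => f (n - m) * g m := by
  refine Summable.of_norm (Summable.of_nonneg_of_le (fun m => norm_nonneg _)
    (fun m => ?_) (hg.mul_left (∑' k, ‖f k‖)))
  calc ‖f (n - m) * g m‖ ≤ ‖f (n - m)‖ * ‖g m‖ := norm_mul_le _ _
    _ ≤ (∑' k, ‖f k‖) * ‖g m‖ :=
      mul_le_mul_of_nonneg_right (le_tsum_norm hf _) (norm_nonneg _)

lemma conv_assoc [CompleteSpace A] (f g h : (Fin d → ℤ) → A)
    (hf : Summable fun n => ‖f n‖) (hg : Summable fun n => ‖g n‖)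
    (hh : Summable fun n => ‖h n‖) :
    conv (conv f g) h = conv f (conv g h) := by
  funext n
  set Cf := ∑' k, ‖f k‖ with hCf
  -- the equiv used for reindexing
  let e : ((Fin d → ℤ) × (Fin d → ℤ)) ≃ ((Fin d → ℤ) × (Fin d → ℤ)) :=
    { toFun := fun p => (p.1 + p.2, p.1)
      invFun := fun q => (q.2, q.1 - q.2)
      left_inv := fun p => by simp
      right_inv := fun q => by simp }
  -- summability of the big product family (RHS form)
  have hprod : Summable fun q : ((Fin d → ℤ) × (Fin d → ℤ)) => ‖g q.1‖ * ‖h q.2‖ :=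
    hg.mul_of_nonneg hh (fun _ => norm_nonneg _) (fun _ => norm_nonneg _)
  let e2 : ((Fin d → ℤ) × (Fin d → ℤ)) ≃ ((Fin d → ℤ) × (Fin d → ℤ)) :=
    { toFun := fun p => (p.1 - p.2, p.2)
      invFun := fun q => (q.1 + q.2, q.2)
      left_inv := fun p => by simp
      right_inv := fun q => by simp }
  have hprod2 : Summable fun p : ((Fin d → ℤ) × (Fin d → ℤ)) => ‖g (p.1 - p.2)‖ * ‖h p.2‖ := by
    have := (e2.summable_iff (f := fun q : ((Fin d → ℤ) × (Fin d → ℤ)) => ‖g q.1‖ * ‖h q.2‖)).2 hprod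
    exact this
  have hR : Summable fun p : ((Fin d → ℤ) × (Fin d → ℤ)) =>
      f (n - p.1) * g (p.1 - p.2) * h p.2 := by
    refine Summable.of_norm (Summable.of_nonneg_of_le (fun p => norm_nonneg _)
      (fun p => ?_) (hprod2.mul_left Cf))
    calc ‖f (n - p.1) * g (p.1 - p.2) * h p.2‖
        ≤ ‖f (n - p.1) * g (p.1 - p.2)‖ * ‖h p.2‖ := norm_mul_le _ _
      _ ≤ ‖f (n - p.1)‖ * ‖g (p.1 - p.2)‖ * ‖h p.2‖ :=
          mul_le_mul_of_nonneg_right (norm_mul_le _ _) (norm_nonneg _)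
      _ ≤ Cf * ‖g (p.1 - p.2)‖ * ‖h p.2‖ := by
          have := le_tsum_norm hf (n - p.1)
          gcongr
      _ = Cf * (‖g (p.1 - p.2)‖ * ‖h p.2‖) := by ring
  have hL : Summable fun p : ((Fin d → ℤ) × (Fin d → ℤ)) =>
      f (n - p.1 - p.2) * g p.2 * h p.1 := by
    have := (e.summable_iff (f := fun p : ((Fin d → ℤ) × (Fin d → ℤ)) =>
      f (n - p.1) * g (p.1 - p.2) * h p.2)).2 hR
    refine this.congr fun p => ?_
    simp only [e, Equiv.coe_fn_mk, Function.comp_apply]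
    rw [sub_sub, add_sub_cancel_left]
  -- compute LHS
  have lhs_eq : conv (conv f g) h n = ∑' p : ((Fin d → ℤ) × (Fin d → ℤ)),
      f (n - p.1 - p.2) * g p.2 * h p.1 := by
    rw [Summable.tsum_prod' hL (fun m => hL.prod_factor m)]
    unfold conv
    refine tsum_congr fun m => ?_
    rw [← Summable.tsum_mul_right _ (summable_shift_mul hf hg (n - m))]
  -- compute RHS
  have rhs_eq : conv f (conv g h) n = ∑' p : ((Fin d → ℤ) × (Fin d → ℤ)),
      f (n - p.1) * g (p.1 - p.2) * h p.2 := by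
    rw [Summable.tsum_prod' hR (fun m => hR.prod_factor m)]
    unfold conv
    refine tsum_congr fun m => ?_
    rw [← Summable.tsum_mul_left _ (summable_shift_mul hg hh m)]
    exact tsum_congr fun k => (mul_assoc _ _ _).symm
  rw [lhs_eq, rhs_eq, ← e.tsum_eq (fun p : ((Fin d → ℤ) × (Fin d → ℤ)) =>
    f (n - p.1) * g (p.1 - p.2) * h p.2)]
  refine tsum_congr fun p => ?_
  simp only [e, Equiv.coe_fn_mk]
  rw [sub_sub, add_sub_cancel_left]

/-- ℓ^p_ω summability with p ≤ 1, ω ≥ 1 implies ℓ¹ summability. -/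
lemma summable_norm_of_lp {p : ℝ} (hp0 : 0 < p) (hp1 : p ≤ 1)
    {ω : (Fin d → ℤ) → ℝ} (hω1 : ∀ n, 1 ≤ ω n)
    {G : (Fin d → ℤ) → A} (hG : Summable fun n => ‖G n‖ ^ p * ω n ^ p) :
    Summable fun n => ‖G n‖ := by
  have h1 : Summable fun n => ‖G n‖ ^ p := by
    refine Summable.of_nonneg_of_le (fun n => Real.rpow_nonneg (norm_nonneg _) _)
      (fun n => ?_) hG
    exact le_mul_of_one_le_right (Real.rpow_nonneg (norm_nonneg _) _)
      (Real.one_le_rpow (hω1 n) hp0.le)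
  have hev : ∀ᶠ n in Filter.cofinite, ‖(‖G n‖)‖ ≤ 1 * ‖(‖G n‖ ^ p)‖ := by
    filter_upwards [h1.tendsto_cofinite_zero.eventually_le_const (by norm_num : (0:ℝ) < 1)]
      with n hn
    have hG1 : ‖G n‖ ≤ 1 := by
      by_contra hcon
      push_neg at hcon
      have : (1:ℝ) < ‖G n‖ ^ p := Real.one_lt_rpow_iff_of_pos (by linarith) |>.2 (Or.inl ⟨hcon, hp0⟩)
      linarith
    rw [one_mul, Real.norm_of_nonneg (norm_nonneg _),
      Real.norm_of_nonneg (Real.rpow_nonneg (norm_nonneg _) _)]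
    rcases eq_or_lt_of_le (norm_nonneg (G n)) with h0 | h0
    · rw [← h0, Real.zero_rpow hp0.ne']
    · calc ‖G n‖ = ‖G n‖ ^ (1:ℝ) := (Real.rpow_one _).symm
        _ ≤ ‖G n‖ ^ p := Real.rpow_le_rpow_of_exponent_ge h0 hG1 hp1
  exact summable_of_isBigO h1 (Asymptotics.IsBigO.of_bound 1 hev)

end Aux

theorem scalar_invertibility_transfers (d : ℕ) (p : ℝ) (hp0 : 0 < p) (hp1 : p ≤ 1)
    (ω : (Fin d → ℤ) → ℝ)
    (hω1 : ∀ n, 1 ≤ ω n) (hωsub : ∀ m n, ω (m + n) ≤ ω m * ω n)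
    (A : Type*) [NormedRing A] [NormOneClass A] [NormedAlgebra ℂ A] [CompleteSpace A]
    (f : (Fin d → ℤ) → ℂ) (hf : Summable (fun n => ‖f n‖))
    (F : (Fin d → ℤ) → A) (hF : ∀ n, F n = (f n) • (1 : A)) :
    (∀ G : (Fin d → ℤ) → A,
      Summable (fun n => ‖G n‖ ^ p * ω n ^ p) →
      conv F G = delta A → conv G F = delta A →
      ∀ n, ∃ c : ℂ, G n = c • (1 : A)) ∧
    ((∃ g : (Fin d → ℤ) → ℂ,
        Summable (fun n => ‖g n‖ ^ p * ω n ^ p) ∧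
        conv f g = delta ℂ ∧ conv g f = delta ℂ) ↔
      (∃ G : (Fin d → ℤ) → A,
        Summable (fun n => ‖G n‖ ^ p * ω n ^ p) ∧
        conv F G = delta A ∧ conv G F = delta A)) := by
  classical
  have hFf : ∀ n, ‖F n‖ = ‖f n‖ := fun n => by rw [hF n, norm_smul, norm_one, mul_one]
  have hFsum : Summable fun n => ‖F n‖ := by
    simpa only [hFf] using hf
  have h1ne : (1 : A) ≠ 0 := by
    intro h
    have h2 := norm_one (α := A)
    rw [h, norm_zero] at h2
    norm_num at h2
  obtain ⟨φ, hφn, hφ1⟩ := exists_dual_vector ℂ (1 : A) (by rw [norm_one]; exact one_ne_zero)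
  have hφ1' : φ 1 = 1 := by rw [hφ1]; simp
  have hφle : ∀ x : A, ‖φ x‖ ≤ ‖x‖ := fun x => by
    calc ‖φ x‖ ≤ ‖φ‖ * ‖x‖ := φ.le_opNorm x
      _ = ‖x‖ := by rw [hφn, one_mul]
  have hdelta : ∀ n : Fin d → ℤ, (delta ℂ n) • (1 : A) = delta A n := by
    intro n; unfold delta; split <;> simp
  have hFfun : F = fun n => f n • (1 : A) := funext hF
  have hconv_smul : ∀ (a b : (Fin d → ℤ) → ℂ), Summable (fun n => ‖a n‖) →
      Summable (fun n => ‖b n‖) →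
      conv (fun n => a n • (1 : A)) (fun n => b n • (1 : A)) =
        fun n => (conv a b n) • (1 : A) := by
    intro a b ha hb
    funext n
    unfold conv
    have hsum : Summable fun m => a (n - m) * b m := summable_shift_mul ha hb n
    have hmap := ((ContinuousLinearMap.id ℂ ℂ).smulRight (1 : A)).map_tsum hsum
    simp only [ContinuousLinearMap.smulRight_apply, ContinuousLinearMap.id_apply] at hmap
    rw [hmap]
    exact tsum_congr fun m => by rw [smul_mul_smul_comm, one_mul]
  have key : ∀ G : (Fin d → ℤ) → A,
      Summable (fun n => ‖G n‖ ^ p * ω n ^ p) →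
      conv F G = delta A → conv G F = delta A →
      ∃ g : (Fin d → ℤ) → ℂ,
        Summable (fun n => ‖g n‖ ^ p * ω n ^ p) ∧
        conv f g = delta ℂ ∧ conv g f = delta ℂ ∧ ∀ n, G n = g n • (1 : A) := by
    intro G hGp h1 h2
    have hGsum : Summable fun n => ‖G n‖ := summable_norm_of_lp hp0 hp1 hω1 hGp
    set g : (Fin d → ℤ) → ℂ := fun n => φ (G n) with hgdef
    have hgle : ∀ n, ‖g n‖ ≤ ‖G n‖ := fun n => hφle _
    have hgsum : Summable fun n => ‖g n‖ :=
      Summable.of_nonneg_of_le (fun n => norm_nonneg _) hgle hGsum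
    have hωnn : ∀ n : Fin d → ℤ, (0:ℝ) ≤ ω n := fun n => by linarith [hω1 n]
    have hgp : Summable fun n => ‖g n‖ ^ p * ω n ^ p := by
      refine Summable.of_nonneg_of_le (fun n => mul_nonneg
        (Real.rpow_nonneg (norm_nonneg _) _) (Real.rpow_nonneg (hωnn n) _))
        (fun n => ?_) hGp
      exact mul_le_mul_of_nonneg_right
        (Real.rpow_le_rpow (norm_nonneg _) (hgle n) hp0.le)
        (Real.rpow_nonneg (hωnn n) _)
    -- forward conv identity for f and g
    have hFG : ∀ n, conv F G n = ∑' m, f (n - m) • G m := by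
      intro n
      unfold conv
      exact tsum_congr fun m => by rw [hF, smul_mul_assoc, one_mul]
    have hsum1 : ∀ n : Fin d → ℤ, Summable fun m => f (n - m) • G m := by
      intro n
      refine Summable.of_norm (Summable.of_nonneg_of_le (fun m => norm_nonneg _)
        (fun m => ?_) (hGsum.mul_left (∑' k, ‖f k‖)))
      rw [norm_smul]
      exact mul_le_mul_of_nonneg_right (le_tsum_norm hf _) (norm_nonneg _)
    have hfg : conv f g = delta ℂ := by
      funext n
      have hc := congrFun h1 n
      rw [hFG n] at hc
      have hmap := φ.map_tsum (hsum1 n)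
      rw [hc] at hmap
      unfold conv
      rw [show (fun m => f (n - m) * g m) = fun m => φ (f (n - m) • G m) from
        funext fun m => by rw [map_smul, smul_eq_mul], ← hmap]
      unfold delta
      split <;> simp [hφ1']
    have hGF : ∀ n, conv G F n = ∑' m, f m • G (n - m) := by
      intro n
      unfold conv
      exact tsum_congr fun m => by rw [hF, mul_smul_comm, mul_one]
    have hsum2 : ∀ n : Fin d → ℤ, Summable fun m => f m • G (n - m) := by
      intro n
      refine Summable.of_norm (Summable.of_nonneg_of_le (fun m => norm_nonneg _)
        (fun m => ?_) (hf.mul_right (∑' k, ‖G k‖)))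
      rw [norm_smul]
      exact mul_le_mul_of_nonneg_left (le_tsum_norm hGsum _) (norm_nonneg _)
    have hgf : conv g f = delta ℂ := by
      funext n
      have hc := congrFun h2 n
      rw [hGF n] at hc
      have hmap := φ.map_tsum (hsum2 n)
      rw [hc] at hmap
      unfold conv
      rw [show (fun m => g (n - m) * f m) = fun m => φ (f m • G (n - m)) from
        funext fun m => by rw [map_smul, smul_eq_mul, mul_comm], ← hmap]
      unfold delta
      split <;> simp [hφ1']
    have hHsum : Summable fun n => ‖g n • (1 : A)‖ := by
      simpa only [norm_smul, norm_one, mul_one] using hgsum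
    have hFH : conv F (fun n => g n • (1 : A)) = delta A := by
      rw [hFfun, hconv_smul f g hf hgsum, hfg]
      funext n
      exact hdelta n
    have hGeq : G = fun n => g n • (1 : A) := by
      calc G = conv G (delta A) := (conv_delta G).symm
        _ = conv G (conv F (fun n => g n • (1 : A))) := by rw [hFH]
        _ = conv (conv G F) (fun n => g n • (1 : A)) :=
            (conv_assoc G F _ hGsum hFsum hHsum).symm
        _ = conv (delta A) (fun n => g n • (1 : A)) := by rw [h2]
        _ = fun n => g n • (1 : A) := delta_conv _
    exact ⟨g, hgp, hfg, hgf, fun n => congrFun hGeq n⟩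
  constructor
  · intro G hGp h1 h2 n
    obtain ⟨g, _, _, _, hsc⟩ := key G hGp h1 h2
    exact ⟨g n, hsc n⟩
  constructor
  · rintro ⟨g, hgp, hfg, hgf⟩
    have hgsum : Summable fun n => ‖g n‖ := summable_norm_of_lp hp0 hp1 hω1 hgp
    refine ⟨fun n => g n • (1 : A), ?_, ?_, ?_⟩
    · simpa only [norm_smul, norm_one, mul_one] using hgp
    · rw [hFfun, hconv_smul f g hf hgsum, hfg]
      funext n
      exact hdelta n
    · rw [hFfun, hconv_smul g f hgsum hf, hgf]
      funext n
      exact hdelta n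
  · rintro ⟨G, hGp, h1, h2⟩
    obtain ⟨g, hgp, hfg, hgf, _⟩ := key G hGp h1 h2
    exact ⟨g, hgp, hfg, hgf⟩
end
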